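/- The function (x₁, x₂, x₃) ↦ √(exp(2(x₁ + x₂)) + exp(2(x₂ + x₃)) + exp(2(x₃ + x₁))) is convex on ℝ³. (In terms of elasticity: the invariant K₂ = ‖cof F‖ is a convex function of the logarithms of the principal stretches, hence of the Hencky strain log V.) -/

import Mathlib

noncomputable section

theorem stmt_7 :
    ConvexOn ℝ Set.univ (fun x : Fin 3 → ℝ =>
      Real.sqrt (Real.exp (2 * (x 0 + x 1)) + Real.exp (2 * (x 1 + x 2))
        + Real.exp (2 * (x 2 + x 0)))) := by
  have amgm : ∀ (a b s t : ℝ), 0 ≤ a → 0 ≤ b → a + b = 1 →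
      Real.exp (a * s + b * t) ≤ a * Real.exp s + b * Real.exp t := by
    intro a b s t ha hb hab
    simpa [smul_eq_mul] using convexOn_exp.2 (Set.mem_univ s) (Set.mem_univ t) ha hb hab
  have hnorm : ∀ z : Fin 3 → ℝ,
      Real.sqrt (Real.exp (2 * (z 0 + z 1)) + Real.exp (2 * (z 1 + z 2))
        + Real.exp (2 * (z 2 + z 0)))
      = ‖(WithLp.equiv 2 (Fin 3 → ℝ)).symm
          ![Real.exp (z 0 + z 1), Real.exp (z 1 + z 2), Real.exp (z 2 + z 0)]‖ := by
    intro z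
    rw [EuclideanSpace.norm_eq]
    congr 1
    have h2 : ∀ t : ℝ, Real.exp (2 * t) = Real.exp t ^ 2 := by
      intro t
      rw [two_mul, Real.exp_add, sq]
    simp [Fin.sum_univ_three, sq_abs, h2]
  have mono : ∀ p q : Fin 3 → ℝ, (∀ i, 0 ≤ p i) → (∀ i, p i ≤ q i) →
      ‖(WithLp.equiv 2 (Fin 3 → ℝ)).symm p‖ ≤ ‖(WithLp.equiv 2 (Fin 3 → ℝ)).symm q‖ := by
    intro p q hp hpq
    rw [EuclideanSpace.norm_eq, EuclideanSpace.norm_eq]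
    apply Real.sqrt_le_sqrt
    apply Finset.sum_le_sum
    intro i _
    simp only [WithLp.equiv_symm_apply, PiLp.toLp_apply, Real.norm_eq_abs, sq_abs]
    exact pow_le_pow_left₀ (hp i) (hpq i) 2
  refine ⟨convex_univ, ?_⟩
  intro x _ y _ a b ha hb hab
  simp only [Pi.add_apply, Pi.smul_apply, smul_eq_mul]
  set gx : Fin 3 → ℝ := ![Real.exp (x 0 + x 1), Real.exp (x 1 + x 2), Real.exp (x 2 + x 0)]
    with hgx
  set gy : Fin 3 → ℝ := ![Real.exp (y 0 + y 1), Real.exp (y 1 + y 2), Real.exp (y 2 + y 0)]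
    with hgy
  have key := hnorm (a • x + b • y)
  simp only [Pi.add_apply, Pi.smul_apply, smul_eq_mul] at key
  rw [key, hnorm x, hnorm y]
  calc ‖(WithLp.equiv 2 (Fin 3 → ℝ)).symm
          ![Real.exp (a * x 0 + b * y 0 + (a * x 1 + b * y 1)),
            Real.exp (a * x 1 + b * y 1 + (a * x 2 + b * y 2)),
            Real.exp (a * x 2 + b * y 2 + (a * x 0 + b * y 0))]‖
      ≤ ‖(WithLp.equiv 2 (Fin 3 → ℝ)).symm (a • gx + b • gy)‖ := by
        apply mono
        · intro i
          fin_cases i <;> simp <;> positivity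
        · intro i
          fin_cases i <;>
            simp only [hgx, hgy, Pi.add_apply, Pi.smul_apply, smul_eq_mul,
              Matrix.cons_val_zero, Matrix.cons_val_one, Matrix.head_cons,
              Matrix.cons_val_fin_one, Fin.mk_one, Matrix.cons_val_two, Matrix.tail_cons] <;>
            [ (calc Real.exp (a * x 0 + b * y 0 + (a * x 1 + b * y 1))
                  = Real.exp (a * (x 0 + x 1) + b * (y 0 + y 1)) := by ring_nf
                _ ≤ a * Real.exp (x 0 + x 1) + b * Real.exp (y 0 + y 1) :=
                  amgm _ _ _ _ ha hb hab);
              (calc Real.exp (a * x 1 + b * y 1 + (a * x 2 + b * y 2))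
                  = Real.exp (a * (x 1 + x 2) + b * (y 1 + y 2)) := by ring_nf
                _ ≤ a * Real.exp (x 1 + x 2) + b * Real.exp (y 1 + y 2) :=
                  amgm _ _ _ _ ha hb hab);
              (calc Real.exp (a * x 2 + b * y 2 + (a * x 0 + b * y 0))
                  = Real.exp (a * (x 2 + x 0) + b * (y 2 + y 0)) := by ring_nf
                _ ≤ a * Real.exp (x 2 + x 0) + b * Real.exp (y 2 + y 0) :=
                  amgm _ _ _ _ ha hb hab)]
    _ ≤ a * ‖(WithLp.equiv 2 (Fin 3 → ℝ)).symm gx‖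
        + b * ‖(WithLp.equiv 2 (Fin 3 → ℝ)).symm gy‖ := by
        have : (WithLp.equiv 2 (Fin 3 → ℝ)).symm (a • gx + b • gy)
            = a • (WithLp.equiv 2 (Fin 3 → ℝ)).symm gx
              + b • (WithLp.equiv 2 (Fin 3 → ℝ)).symm gy := rfl
        rw [this]
        refine le_trans (norm_add_le _ _) ?_
        rw [norm_smul, norm_smul, Real.norm_of_nonneg ha, Real.norm_of_nonneg hb]
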